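/- Let Γ act by homeomorphisms on compact metric spaces X and Y with both actions minimal, and let π : X → Y be a Γ-equivariant continuous surjection admitting a continuous Γ-equivariant section y ↦ λ_y ∈ M(X) with π*(λ_y) = δ_y. Then there exists a dense Gδ subset Y_fs ⊆ Y such that supp(λ_y) = π⁻¹(y) for every y ∈ Y_fs. -/

import Mathlib

open MeasureTheory Filter Topology

/-- The support of a Borel measure: points all of whose open neighborhoods have
positive measure. -/
def msupport {X : Type*} [TopologicalSpace X] [MeasurableSpace X]
    (μ : Measure X) : Set X :=
  {x : X | ∀ U : Set X, IsOpen U → x ∈ U → 0 < μ U}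

/-- For a RIM extension `π : X → Y` of minimal compact metric `Γ`-systems, with
continuous `Γ`-equivariant section `y ↦ λ_y`, there is a dense Gδ set
`Y_fs ⊆ Y` on which `supp(λ_y) = π⁻¹(y)`. -/
theorem stmt_8 {Γ X Y : Type*} [Group Γ]
    [MetricSpace X] [CompactSpace X] [MetricSpace Y] [CompactSpace Y]
    [MeasurableSpace X] [BorelSpace X] [MeasurableSpace Y] [BorelSpace Y]
    [MulAction Γ X] [ContinuousConstSMul Γ X]
    [MulAction Γ Y] [ContinuousConstSMul Γ Y]
    (hminX : ∀ x : X, Dense (MulAction.orbit Γ x))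
    (hminY : ∀ y : Y, Dense (MulAction.orbit Γ y))
    (π : X → Y) (hc : Continuous π) (hs : Function.Surjective π)
    (heq : ∀ (γ : Γ) (x : X), π (γ • x) = γ • π x)
    (lam : Y → ProbabilityMeasure X) (hlam : Continuous lam)
    (hlameq : ∀ (γ : Γ) (y : Y),
      (lam (γ • y) : Measure X) = (lam y : Measure X).map (fun x => γ • x))
    (hsec : ∀ y : Y, (lam y : Measure X).map π = Measure.dirac y) :
    ∃ Yfs : Set Y, Dense Yfs ∧ IsGδ Yfs ∧
      ∀ y ∈ Yfs, msupport (lam y : Measure X) = π ⁻¹' {y} := by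
  obtain ⟨B, hBc, -, hBbasis⟩ := TopologicalSpace.exists_countable_basis X
  -- the set of y where λ_y gives positive mass to U
  set O : Set X → Set Y := fun U => {y | 0 < (lam y : Measure X) U} with hOdef
  -- O U is open for open U (portmanteau)
  have hOopen : ∀ U : Set X, IsOpen U → IsOpen (O U) := by
    intro U hU
    have hCl : IsClosed {y | (lam y : Measure X) U = 0} := by
      rw [isClosed_iff_clusterPt]
      intro a ha
      have hne : (𝓝 a ⊓ Filter.principal {y | (lam y : Measure X) U = 0}).NeBot := ha
      set F := 𝓝 a ⊓ Filter.principal {y | (lam y : Measure X) U = 0} with hF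
      have htend : Filter.Tendsto lam F (nhds (lam a)) :=
        (hlam.tendsto a).mono_left inf_le_left
      have hlim := ProbabilityMeasure.le_liminf_measure_open_of_tendsto htend hU
      have hev : ∀ᶠ y in F, (lam y : Measure X) U = 0 := by
        apply Filter.eventually_inf_principal.mpr
        exact Filter.Eventually.of_forall fun y hy => hy
      have : F.liminf (fun y => (lam y : Measure X) U) = 0 := by
        rw [Filter.liminf_congr hev]
        simp
      have : (lam a : Measure X) U ≤ 0 := this ▸ hlim
      exact le_antisymm this zero_le
    have : O U = {y | (lam y : Measure X) U = 0}ᶜ := by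
      ext y
      simp [hOdef, pos_iff_ne_zero]
    rw [this]
    exact hCl.isOpen_compl
  -- support is contained in the fiber
  have hsub : ∀ y : Y, ∀ x : X, x ∈ msupport (lam y : Measure X) → π x = y := by
    intro y x hx
    by_contra h
    have hV : IsOpen ({y}ᶜ : Set Y) := isClosed_singleton.isOpen_compl
    have hxV : π x ∈ ({y}ᶜ : Set Y) := h
    have h0 : (lam y : Measure X) (π ⁻¹' {y}ᶜ) = 0 := by
      have := Measure.map_apply hc.measurable (hV.measurableSet) (μ := (lam y : Measure X))
      rw [hsec y] at this
      rw [← this, Measure.dirac_apply' _ hV.measurableSet]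
      simp
    have := hx (π ⁻¹' {y}ᶜ) (hV.preimage hc) hxV
    rw [h0] at this
    exact lt_irrefl _ this
  -- support is nonempty
  have hne : ∀ y : Y, ∃ x : X, x ∈ msupport (lam y : Measure X) := by
    intro y
    by_contra h
    push_neg at h
    simp only [msupport, Set.mem_setOf_eq, not_forall] at h
    choose U hUo hUx hU0 using h
    have hcov : (Set.univ : Set X) ⊆ ⋃ x, U x := fun x _ => Set.mem_iUnion.mpr ⟨x, hUx x⟩
    obtain ⟨t, ht⟩ := isCompact_univ.elim_finite_subcover U hUo hcov
    have h0 : (lam y : Measure X) (⋃ x ∈ t, U x) = 0 := by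
      apply measure_biUnion_null_iff t.countable_toSet |>.mpr
      intro x _
      exact le_antisymm (not_lt.mp (hU0 x)) zero_le
    have h1 : (lam y : Measure X) Set.univ = 1 := measure_univ
    have := measure_mono (μ := (lam y : Measure X)) ht
    rw [h0, h1] at this
    exact one_ne_zero (le_antisymm this zero_le)
  refine ⟨⋂ U ∈ B, (O U ∪ (closure (O U))ᶜ), ?_, ?_, ?_⟩
  · -- dense
    apply dense_biInter_of_isOpen
    · intro U hU
      exact (hOopen U (hBbasis.isOpen hU)).union (isClosed_closure.isOpen_compl)
    · exact hBc
    · intro U hU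
      rw [dense_iff_closure_eq, ← Set.univ_subset_iff]
      intro y _
      rw [closure_union]
      by_cases h : y ∈ closure (O U)
      · exact Or.inl h
      · exact Or.inr (subset_closure h)
  · -- Gδ
    exact IsGδ.biInter hBc fun U hU =>
      ((hOopen U (hBbasis.isOpen hU)).union isClosed_closure.isOpen_compl).isGδ
  · -- main property
    intro y hy
    ext x
    constructor
    · intro hx
      exact hsub y x hx
    · intro hx
      have hπx : π x = y := hx
      intro W hWo hxW
      obtain ⟨U, hUB, hxU, hUW⟩ := hBbasis.exists_subset_of_mem_open hxW hWo
      have hUo : IsOpen U := hBbasis.isOpen hUB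
      suffices hpos : 0 < (lam y : Measure X) U by
        exact lt_of_lt_of_le hpos (measure_mono hUW)
      have hy' : y ∈ O U ∪ (closure (O U))ᶜ := by
        have := Set.mem_iInter₂.mp hy U hUB
        exact this
      rcases hy' with hy' | hy'
      · exact hy'
      · exfalso
        -- V is an open neighborhood of y avoiding O U
        set V : Set Y := (closure (O U))ᶜ with hVdef
        have hVo : IsOpen V := isClosed_closure.isOpen_compl
        have hVdisj : ∀ z ∈ V, (lam z : Measure X) U = 0 := by
          intro z hz
          by_contra hz0
          exact hz (subset_closure (pos_iff_ne_zero.mpr hz0))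
        obtain ⟨x₀, hx₀⟩ := hne y
        have hπx₀ : π x₀ = y := hsub y x₀ hx₀
        -- the open set U ∩ π⁻¹ V contains x
        have hWo' : IsOpen (U ∩ π ⁻¹' V) := hUo.inter (hVo.preimage hc)
        have hxW' : x ∈ U ∩ π ⁻¹' V := ⟨hxU, by simp [Set.mem_preimage, hπx]; exact hy'⟩
        -- minimality: the orbit of x₀ meets it
        obtain ⟨z, hzorb, hzW⟩ := (hminX x₀).exists_mem_open hWo' ⟨x, hxW'⟩
        obtain ⟨γ, hγ⟩ := hzorb
        rw [← hγ] at hzW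
        have hγyV : γ • y ∈ V := by
          have : π (γ • x₀) ∈ V := hzW.2
          rwa [heq, hπx₀] at this
        have h0 : (lam (γ • y) : Measure X) U = 0 := hVdisj _ hγyV
        have hmeas : Measurable (fun x : X => γ • x) := (continuous_const_smul γ).measurable
        rw [hlameq γ y, Measure.map_apply hmeas hUo.measurableSet] at h0
        have hpre : IsOpen ((fun x : X => γ • x) ⁻¹' U) := hUo.preimage (continuous_const_smul γ)
        have hx₀pre : x₀ ∈ (fun x : X => γ • x) ⁻¹' U := hzW.1
        have := hx₀ _ hpre hx₀pre
        rw [h0] at this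
        exact lt_irrefl _ this
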